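/- Let f : ℝ^N → ℝ be convex and differentiable with ∇f Lipschitz with constant L_f ≥ 0, g : ℝ^N → ℝ μ-strongly convex with μ > 0, F := f + g, A a real p×N matrix, b ∈ ℝ^p. Let k₀ ≥ 0, and for k ≥ 1 let β_k ∈ ℝ, ρ_k > 0 and symmetric N×N matrices P^k satisfy: 0 < ρ_k ≤ 2β_k and P^k ⪰ β_k AᵀA + L_f I for all k ≥ 1; (k+k₀+1)/ρ_k ≤ (k+k₀)/ρ_{k−1} for all k ≥ 2; and (k+k₀+1)(P^k − β_k AᵀA) ⪯ (k+k₀)(P^{k−1} − β_{k−1} AᵀA + μI) for all k ≥ 2. Let sequences x^k ∈ ℝ^N, λ^k ∈ ℝ^p, r^k := A x^k − b satisfy, for each k ≥ 1: there is a subgradient v of g at x^{k+1} with ∇f(x^k) − Aᵀ(λ^k − β_k r^k) + v + P^k(x^{k+1} − x^k) = 0, and λ^{k+1} = λ^k − ρ_k r^{k+1}. Then for every t ≥ 1 and every (x, λ) with Ax = b: ∑_{k=1}^t (k+k₀+1) Φ(x^{k+1}, x, λ) + ∑_{k=1}^t ((k+k₀+1)/2)(2β_k − ρ_k)‖r^{k+1}‖²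 + ((t+k₀+1)/2)‖x^{t+1} − x‖²_{P^t − β_t AᵀA + μI} ≤ φ₁(x, λ), where φ₁(x, λ) := ((k₀+2)/(2ρ₁))‖λ − λ¹‖² + ((k₀+2)/2)‖x¹ − x‖²_{P¹ − β₁ AᵀA}. -/

import Mathlib

/-- quadratic form `‖v‖²_W = ⟪v, W v⟫` associated to an operator `W`. -/
noncomputable def qform {E : Type*} [NormedAddCommGroup E] [InnerProductSpace ℝ E]
    (W : E →L[ℝ] E) (v : E) : ℝ := inner ℝ v (W v)

section Helpers

variable {E F : Type*} [NormedAddCommGroup E] [InnerProductSpace ℝ E]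
  [NormedAddCommGroup F] [InnerProductSpace ℝ F]

lemma qform_sub (W₁ W₂ : E →L[ℝ] E) (v : E) : qform (W₁ - W₂) v = qform W₁ v - qform W₂ v := by
  simp [qform, inner_sub_right]

lemma qform_add (W₁ W₂ : E →L[ℝ] E) (v : E) : qform (W₁ + W₂) v = qform W₁ v + qform W₂ v := by
  simp [qform, inner_add_right]

lemma qform_smul (c : ℝ) (W : E →L[ℝ] E) (v : E) : qform (c • W) v = c * qform W v := by
  simp [qform, real_inner_smul_right]

lemma qform_one (v : E) : qform (1 : E →L[ℝ] E) v = ‖v‖ ^ 2 := by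
  simp [qform, real_inner_self_eq_norm_sq]

lemma qform_ata [CompleteSpace E] [CompleteSpace F] (A : E →L[ℝ] F) (v : E) :
    qform ((ContinuousLinearMap.adjoint A).comp A) v = ‖A v‖ ^ 2 := by
  simp [qform, ContinuousLinearMap.adjoint_inner_right, real_inner_self_eq_norm_sq]

lemma qform_polar (P : E →L[ℝ] E) (hP : ∀ u v : E, inner ℝ (P u) v = (inner ℝ u (P v) : ℝ))
    (d e : E) : 2 * (inner ℝ (P d) e : ℝ) = qform P e + qform P d - qform P (e - d) := by
  have h1 : qform P (e - d)
      = qform P e - (inner ℝ e (P d) : ℝ) - (inner ℝ d (P e) : ℝ) + qform P d := by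
    simp only [qform, map_sub, inner_sub_left, inner_sub_right]; ring
  have h2 := hP d e
  have h3 : (inner ℝ e (P d) : ℝ) = inner ℝ (P d) e := real_inner_comm _ _
  linarith


variable {E : Type*} [NormedAddCommGroup E] [InnerProductSpace ℝ E] [CompleteSpace E]

lemma line_deriv (f : E → ℝ) (Gf : E → E) (hfgrad : ∀ z, HasGradientAt f (Gf z) z)
    (x d : E) (t : ℝ) :
    HasDerivAt (fun s : ℝ => f (x + s • d)) (inner ℝ (Gf (x + t • d)) d : ℝ) t := by
  have h1 : HasDerivAt (fun s : ℝ => x + s • d) d t := by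
    simpa using ((hasDerivAt_id t).smul_const d).const_add x
  have h2 := (hfgrad (x + t • d)).hasFDerivAt.comp_hasDerivAt t h1
  simp at h2
  exact h2

lemma descent_lemma (f : E → ℝ) (Gf : E → E) (Lf : ℝ)
    (hfgrad : ∀ z, HasGradientAt f (Gf z) z)
    (hflip : ∀ u v, ‖Gf u - Gf v‖ ≤ Lf * ‖u - v‖) (x y : E) :
    f y ≤ f x + (inner ℝ (Gf x) (y - x) : ℝ) + Lf / 2 * ‖y - x‖ ^ 2 := by
  set d := y - x with hd
  set c1 : ℝ := inner ℝ (Gf x) d with hc1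
  set c2 : ℝ := Lf / 2 * ‖d‖ ^ 2 with hc2
  set φ : ℝ → ℝ := fun t => f (x + t • d) - t * c1 - c2 * t ^ 2 with hφdef
  have hφ : ∀ t : ℝ, HasDerivAt φ
      ((inner ℝ (Gf (x + t • d)) d : ℝ) - c1 - c2 * (2 * t)) t := by
    intro t
    have h3 : HasDerivAt (fun t : ℝ => c2 * t ^ 2) (c2 * (2 * t)) t := by
      simpa [mul_comm] using (hasDerivAt_pow 2 t).const_mul c2
    have := ((line_deriv f Gf hfgrad x d t).sub ((hasDerivAt_id t).mul_const c1)).sub h3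
    simp at this
    exact this
  have hanti : AntitoneOn φ (Set.Icc (0:ℝ) 1) := by
    apply antitoneOn_of_deriv_nonpos (convex_Icc 0 1)
    · exact (fun t _ => (hφ t).differentiableAt.continuousAt.continuousWithinAt)
    · exact fun t _ => ((hφ t).differentiableAt).differentiableWithinAt
    · intro s hs
      rw [interior_Icc] at hs
      rw [(hφ s).deriv]
      have h1 : (inner ℝ (Gf (x + s • d)) d : ℝ) - c1 = inner ℝ (Gf (x + s • d) - Gf x) d := by
        rw [inner_sub_left]
      have h2 : (inner ℝ (Gf (x + s • d) - Gf x) d : ℝ) ≤ ‖Gf (x + s • d) - Gf x‖ * ‖d‖ :=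
        real_inner_le_norm _ _
      have h3 : ‖Gf (x + s • d) - Gf x‖ ≤ Lf * ‖x + s • d - x‖ := hflip _ _
      have h4 : ‖x + s • d - x‖ = s * ‖d‖ := by
        simp [norm_smul, abs_of_pos hs.1]
      have h5 : ‖Gf (x + s • d) - Gf x‖ * ‖d‖ ≤ (Lf * (s * ‖d‖)) * ‖d‖ := by
        have := h3.trans_eq (by rw [h4])
        exact mul_le_mul_of_nonneg_right this (norm_nonneg _)
      have h6 : (inner ℝ (Gf (x + s • d)) d : ℝ) - c1 ≤ Lf * s * ‖d‖ ^ 2 := by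
        rw [h1]; nlinarith [h2, h5]
      have hc2' : c2 * (2 * s) = Lf * s * ‖d‖ ^ 2 := by rw [hc2]; ring
      linarith
  have h01 := hanti (Set.left_mem_Icc.2 zero_le_one) (Set.right_mem_Icc.2 zero_le_one)
    zero_le_one
  have hφ0 : φ 0 = f x := by simp [hφdef]
  have hxy : x + (1:ℝ) • d = y := by rw [hd]; module
  have hxy' : x + d = y := by rw [hd]; abel
  have hφ1 : φ 1 = f y - c1 - c2 := by simp [hφdef, hxy']
  rw [hφ0, hφ1] at h01
  linarith

lemma convex_first_order (f : E → ℝ) (Gf : E → E)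
    (hfconv : ConvexOn ℝ Set.univ f) (hfgrad : ∀ z, HasGradientAt f (Gf z) z)
    (x y : E) : f x + (inner ℝ (Gf x) (y - x) : ℝ) ≤ f y := by
  set d := y - x with hd
  set φ : ℝ → ℝ := fun s => f (x + s • d) with hφdef
  have hder : HasDerivAt φ (inner ℝ (Gf x) d : ℝ) 0 := by
    have := line_deriv f Gf hfgrad x d 0
    simpa using this
  have hslope := hasDerivAt_iff_tendsto_slope.1 hder
  have hslope' : Filter.Tendsto (slope φ 0) (nhdsWithin 0 (Set.Ioi 0))
      (nhds (inner ℝ (Gf x) d : ℝ)) :=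
    hslope.mono_left (nhdsWithin_mono _ (fun t ht => by
      simp only [Set.mem_compl_iff, Set.mem_singleton_iff]
      exact ne_of_gt ht))
  have hev : ∀ᶠ t in nhdsWithin (0:ℝ) (Set.Ioi 0), slope φ 0 t ≤ f y - f x := by
    filter_upwards [Ioc_mem_nhdsGT_of_mem (Set.mem_Ico.2 ⟨le_refl 0, zero_lt_one⟩)]
      with t ht
    have ht0 : 0 < t := ht.1
    have ht1 : t ≤ 1 := ht.2
    have hconv := hfconv.2 (Set.mem_univ x) (Set.mem_univ y)
      (by linarith : (0:ℝ) ≤ 1 - t) (le_of_lt ht0) (by ring)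
    have hpt : (1 - t) • x + t • y = x + t • d := by
      rw [hd]; module
    rw [hpt] at hconv
    have hφt : φ t ≤ (1 - t) * f x + t * f y := by
      simpa [hφdef] using hconv
    have hφ0 : φ 0 = f x := by simp [hφdef]
    rw [slope_def_field, hφ0]
    have hq : (φ t - f x) / t ≤ (t * (f y - f x)) / t := by
      gcongr
      linarith
    calc (φ t - f x) / (t - 0) = (φ t - f x) / t := by ring_nf
      _ ≤ (t * (f y - f x)) / t := hq
      _ = f y - f x := by field_simp
  exact le_of_sub_nonneg (by linarith [le_of_tendsto hslope' hev])


variable {E : Type*} [NormedAddCommGroup E] [InnerProductSpace ℝ E]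

lemma smul_norm_sq_identity (a bb : E) (θ : ℝ) :
    ‖(1 - θ) • a + θ • bb‖ ^ 2
      = (1 - θ) * ‖a‖ ^ 2 + θ * ‖bb‖ ^ 2 - θ * (1 - θ) * ‖bb - a‖ ^ 2 := by
  have h1 : ‖(1 - θ) • a + θ • bb‖ ^ 2
      = ‖(1 - θ) • a‖ ^ 2 + 2 * (inner ℝ ((1 - θ) • a) (θ • bb) : ℝ) + ‖θ • bb‖ ^ 2 :=
    norm_add_sq_real _ _
  have h2 : ‖bb - a‖ ^ 2 = ‖bb‖ ^ 2 - 2 * (inner ℝ bb a : ℝ) + ‖a‖ ^ 2 := norm_sub_sq_real _ _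
  have h3 : (inner ℝ ((1 - θ) • a) (θ • bb) : ℝ) = (1 - θ) * θ * inner ℝ a bb := by
    rw [real_inner_smul_left, real_inner_smul_right]; ring
  have h4 : ‖(1 - θ) • a‖ ^ 2 = (1 - θ) ^ 2 * ‖a‖ ^ 2 := by
    rw [norm_smul]; simp [mul_pow, sq_abs]
  have h5 : ‖θ • bb‖ ^ 2 = θ ^ 2 * ‖bb‖ ^ 2 := by
    rw [norm_smul]; simp [mul_pow, sq_abs]
  have h6 : (inner ℝ a bb : ℝ) = inner ℝ bb a := real_inner_comm _ _
  rw [h1, h3, h4, h5, h6]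
  nlinarith [h2]

lemma strong_subgrad (g : E → ℝ) (μ : ℝ) (hμ : 0 < μ)
    (hg : ConvexOn ℝ Set.univ (fun z => g z - μ / 2 * ‖z‖ ^ 2))
    (xh v : E) (hv : ∀ z, g xh + (inner ℝ v (z - xh) : ℝ) ≤ g z) (z : E) :
    g xh + (inner ℝ v (z - xh) : ℝ) + μ / 2 * ‖z - xh‖ ^ 2 ≤ g z := by
  set c : ℝ := ‖z - xh‖ ^ 2 with hcdef
  have hc0 : 0 ≤ c := sq_nonneg _
  have key : ∀ θ : ℝ, 0 < θ → θ ≤ 1 →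
      (inner ℝ v (z - xh) : ℝ) + μ / 2 * (1 - θ) * c ≤ g z - g xh := by
    intro θ hθ0 hθ1
    set w : E := (1 - θ) • xh + θ • z with hw
    have hw2 : w = xh + θ • (z - xh) := by rw [hw]; module
    have hv' := hv w
    have hwd : w - xh = θ • (z - xh) := by rw [hw2]; abel
    have hinner : (inner ℝ v (w - xh) : ℝ) = θ * inner ℝ v (z - xh) := by
      rw [hwd, real_inner_smul_right]
    rw [hinner] at hv'
    have hconv := hg.2 (Set.mem_univ xh) (Set.mem_univ z)
      (by linarith : (0:ℝ) ≤ 1 - θ) (le_of_lt hθ0) (by ring : (1 - θ) + θ = 1)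
    simp only [smul_eq_mul] at hconv
    have hnorm := smul_norm_sq_identity xh z θ
    rw [← hw] at hnorm
    rw [← hw] at hconv
    -- hconv : g w - μ/2 * ‖w‖^2 ≤ (1-θ)*(g xh - μ/2‖xh‖^2) + θ*(g z - μ/2‖z‖^2)
    have hgw : g w ≤ (1 - θ) * g xh + θ * g z - μ / 2 * (θ * (1 - θ) * c) := by
      have := hconv
      rw [hcdef]
      nlinarith [hnorm]
    have hθstep : θ * (inner ℝ v (z - xh) : ℝ) + μ / 2 * (θ * (1 - θ) * c)
        ≤ θ * (g z - g xh) := by nlinarith [hv', hgw]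
    have := mul_le_mul_of_nonneg_left hθstep (le_of_lt (inv_pos.2 hθ0))
    have hθne : θ ≠ 0 := ne_of_gt hθ0
    calc (inner ℝ v (z - xh) : ℝ) + μ / 2 * (1 - θ) * c
        = θ⁻¹ * (θ * (inner ℝ v (z - xh) : ℝ) + μ / 2 * (θ * (1 - θ) * c)) := by
          field_simp
      _ ≤ θ⁻¹ * (θ * (g z - g xh)) := this
      _ = g z - g xh := by field_simp
  by_contra hcon
  push_neg at hcon
  set s : ℝ := g z - g xh - (inner ℝ v (z - xh) : ℝ) with hsdef
  have hs0 : 0 ≤ s := by have := key 1 one_pos le_rfl; simp at this; linarith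
  have hsc : s < μ / 2 * c := by rw [hsdef]; linarith
  have hcpos : 0 < c := by nlinarith
  set θ : ℝ := (μ / 2 * c - s) / (μ * c) with hθdef
  have hθpos : 0 < θ := div_pos (by linarith) (by positivity)
  have hθle : θ ≤ 1 := by
    rw [hθdef, div_le_one (by positivity)]
    nlinarith
  have hk := key θ hθpos hθle
  have hθmc : θ * (μ * c) = μ / 2 * c - s := by
    rw [hθdef]; field_simp
  nlinarith [hk]


open ContinuousLinearMap in
lemma onestep {E F : Type*} [NormedAddCommGroup E] [InnerProductSpace ℝ E] [CompleteSpace E]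
    [NormedAddCommGroup F] [InnerProductSpace ℝ F] [CompleteSpace F]
    (f g : E → ℝ) (Gf : E → E) (Lf : ℝ)
    (hfconv : ConvexOn ℝ Set.univ f) (hfgrad : ∀ z, HasGradientAt f (Gf z) z)
    (hflip : ∀ u v, ‖Gf u - Gf v‖ ≤ Lf * ‖u - v‖)
    (μ : ℝ) (hμ : 0 < μ) (hg : ConvexOn ℝ Set.univ fun z => g z - μ / 2 * ‖z‖ ^ 2)
    (A : E →L[ℝ] F) (b : F) (β ρ : ℝ) (hρpos : 0 < ρ)
    (P : E →L[ℝ] E) (hPsym : ∀ u v : E, inner ℝ (P u) v = (inner ℝ u (P v) : ℝ))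
    (hPge : ∀ v, 0 ≤ qform (P - β • ((adjoint A).comp A) - Lf • 1) v)
    (xk xn : E) (lamk : F) (v : E)
    (hv : ∀ z, g xn + (inner ℝ v (z - xn) : ℝ) ≤ g z)
    (hopt : Gf xk - adjoint A (lamk - β • (A xk - b)) + v + P (xn - xk) = 0)
    (xx : E) (lam : F) (hxx : A xx = b) :
    ((f xn + g xn) - (f xx + g xx) - (inner ℝ lam (A xn - b) : ℝ))
      + (2 * β - ρ) / 2 * ‖A xn - b‖ ^ 2
      + 1 / (2 * ρ) * ‖lam - (lamk - ρ • (A xn - b))‖ ^ 2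
      + 1 / 2 * qform (P - β • ((adjoint A).comp A) + μ • 1) (xn - xx)
    ≤ 1 / (2 * ρ) * ‖lam - lamk‖ ^ 2
      + 1 / 2 * qform (P - β • ((adjoint A).comp A)) (xk - xx) := by
  set d : E := xn - xk with hd
  set e : E := xn - xx with he
  set ek : E := xk - xx with hek
  set rn : F := A xn - b with hrn
  set rk : F := A xk - b with hrk
  have hAe : A e = rn := by rw [he, map_sub, hxx, hrn]
  have hAek : A ek = rk := by rw [hek, map_sub, hxx, hrk]
  have hAd : A d = rn - rk := by rw [hd, map_sub, hrn, hrk]; abel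
  have heds : e - d = ek := by rw [he, hd, hek]; abel
  -- (1) f bound
  have hdesc := descent_lemma f Gf Lf hfgrad hflip xk xn
  have hconv := convex_first_order f Gf hfconv hfgrad xk xx
  have hGsplit : (inner ℝ (Gf xk) d : ℝ)
      = (inner ℝ (Gf xk) e : ℝ) + (inner ℝ (Gf xk) (xx - xk) : ℝ) := by
    rw [← inner_add_right]
    congr 1
    rw [hd, he]; abel
  have H1 : f xn ≤ f xx + (inner ℝ (Gf xk) e : ℝ) + Lf / 2 * ‖d‖ ^ 2 := by
    rw [← hd] at hdesc; linarith
  -- (2) g bound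
  have hsg := strong_subgrad g μ hμ hg xn v hv xx
  have hxxe : xx - xn = -e := by rw [he]; abel
  have H2 : g xn - (inner ℝ v e : ℝ) + μ / 2 * ‖e‖ ^ 2 ≤ g xx := by
    rw [hxxe, inner_neg_right] at hsg
    have : ‖(-e : E)‖ = ‖e‖ := norm_neg e
    rw [this] at hsg; linarith
  -- (3) optimality
  have H3 : (inner ℝ (Gf xk) e : ℝ) - ((inner ℝ lamk rn : ℝ) - β * (inner ℝ rk rn : ℝ))
      + (inner ℝ v e : ℝ) + (inner ℝ (P d) e : ℝ) = 0 := by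
    have h0 := congrArg (fun w : E => (inner ℝ w e : ℝ)) hopt
    simp only [inner_add_left, inner_sub_left, inner_zero_left] at h0
    have hadj : (inner ℝ ((adjoint A) (lamk - β • (A xk - b))) e : ℝ)
        = (inner ℝ lamk rn : ℝ) - β * (inner ℝ rk rn : ℝ) := by
      rw [adjoint_inner_left, hAe, ← hrk, inner_sub_left, real_inner_smul_left]
    rw [hadj] at h0
    linarith
  -- (4) polarization
  have H4 : 2 * (inner ℝ (P d) e : ℝ) = qform P e + qform P d - qform P ek := by
    rw [← heds]; exact qform_polar P hPsym d e
  -- (5) P lower bound at d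
  have H5 : β * ‖rn‖ ^ 2 - 2 * (β * (inner ℝ rk rn : ℝ)) + β * ‖rk‖ ^ 2 + Lf * ‖d‖ ^ 2
      ≤ qform P d := by
    have h := hPge d
    rw [qform_sub, qform_sub, qform_smul, qform_smul, qform_ata, qform_one, hAd] at h
    have hns : ‖rn - rk‖ ^ 2 = ‖rn‖ ^ 2 - 2 * (inner ℝ rn rk : ℝ) + ‖rk‖ ^ 2 :=
      norm_sub_sq_real _ _
    have hcomm : (inner ℝ rn rk : ℝ) = inner ℝ rk rn := real_inner_comm _ _
    rw [hns, hcomm] at h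
    nlinarith [h]
  -- (6),(7) qform expansions
  have H6 : qform (P - β • ((adjoint A).comp A) + μ • 1) e
      = qform P e - β * ‖rn‖ ^ 2 + μ * ‖e‖ ^ 2 := by
    rw [qform_add, qform_sub, qform_smul, qform_smul, qform_ata, qform_one, hAe]
  have H7 : qform (P - β • ((adjoint A).comp A)) ek
      = qform P ek - β * ‖rk‖ ^ 2 := by
    rw [qform_sub, qform_smul, qform_ata, hAek]
  -- (8) lambda expansion
  have hlamv : lam - (lamk - ρ • rn) = (lam - lamk) + ρ • rn := by abel
  have H8 : ‖lam - (lamk - ρ • rn)‖ ^ 2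
      = ‖lam - lamk‖ ^ 2 + 2 * (ρ * (inner ℝ (lam - lamk) rn : ℝ)) + ρ ^ 2 * ‖rn‖ ^ 2 := by
    rw [hlamv, norm_add_sq_real, real_inner_smul_right, norm_smul]
    simp [mul_pow, sq_abs]
  have Hlam : 1 / (2 * ρ) * ‖lam - (lamk - ρ • rn)‖ ^ 2
      = 1 / (2 * ρ) * ‖lam - lamk‖ ^ 2 + (inner ℝ (lam - lamk) rn : ℝ)
        + ρ / 2 * ‖rn‖ ^ 2 := by
    rw [H8]
    field_simp
  have H9 : (inner ℝ (lam - lamk) rn : ℝ) = (inner ℝ lam rn : ℝ) - (inner ℝ lamk rn : ℝ) :=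
    inner_sub_left _ _ _

  rw [H6, H7, Hlam]
  linarith [H1, H2, H3, H4, H5, H9]


end Helpers

set_option maxHeartbeats 1600000 in
/-- Theorem 2.2 of the paper. -/
theorem stmt_3
    {p N : ℕ}
    (f g : EuclideanSpace ℝ (Fin N) → ℝ)
    (Gf : EuclideanSpace ℝ (Fin N) → EuclideanSpace ℝ (Fin N))
    (Lf : ℝ) (hLf : 0 ≤ Lf)
    (hfconv : ConvexOn ℝ Set.univ f)
    (hfgrad : ∀ z, HasGradientAt f (Gf z) z)
    (hflip : ∀ u v, ‖Gf u - Gf v‖ ≤ Lf * ‖u - v‖)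
    (μ : ℝ) (hμ : 0 < μ)
    (hg : ConvexOn ℝ Set.univ (fun z => g z - μ / 2 * ‖z‖ ^ 2))
    (A : EuclideanSpace ℝ (Fin N) →L[ℝ] EuclideanSpace ℝ (Fin p))
    (b : EuclideanSpace ℝ (Fin p))
    (k₀ : ℝ) (hk₀ : 0 ≤ k₀)
    (β ρ : ℕ → ℝ)
    (P : ℕ → (EuclideanSpace ℝ (Fin N) →L[ℝ] EuclideanSpace ℝ (Fin N)))
    (hPsym : ∀ k, 1 ≤ k → ∀ u v, inner ℝ (P k u) v = (inner ℝ u (P k v) : ℝ))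
    (hρpos : ∀ k, 1 ≤ k → 0 < ρ k)
    (hρβ : ∀ k, 1 ≤ k → ρ k ≤ 2 * β k)
    (hPge : ∀ k, 1 ≤ k → ∀ v,
      0 ≤ qform (P k - β k • ((ContinuousLinearMap.adjoint A).comp A) - Lf • 1) v)
    (hρmono : ∀ k : ℕ, 2 ≤ k →
      ((k : ℝ) + k₀ + 1) / ρ k ≤ ((k : ℝ) + k₀) / ρ (k - 1))
    (hPmono : ∀ k : ℕ, 2 ≤ k → ∀ v,
      ((k : ℝ) + k₀ + 1) *
          qform (P k - β k • ((ContinuousLinearMap.adjoint A).comp A)) v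
        ≤ ((k : ℝ) + k₀) *
          qform (P (k - 1) - β (k - 1) • ((ContinuousLinearMap.adjoint A).comp A) + μ • 1) v)
    (x : ℕ → EuclideanSpace ℝ (Fin N)) (lamseq : ℕ → EuclideanSpace ℝ (Fin p))
    (hiter : ∀ k, 1 ≤ k → ∃ v : EuclideanSpace ℝ (Fin N),
      (∀ z, g (x (k + 1)) + inner ℝ v (z - x (k + 1)) ≤ g z) ∧
      Gf (x k) - ContinuousLinearMap.adjoint A (lamseq k - β k • (A (x k) - b))
        + v + P k (x (k + 1) - x k) = 0)
    (hlam : ∀ k, 1 ≤ k → lamseq (k + 1) = lamseq k - ρ k • (A (x (k + 1)) - b))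
    (t : ℕ) (ht : 1 ≤ t)
    (xx : EuclideanSpace ℝ (Fin N)) (lam : EuclideanSpace ℝ (Fin p))
    (hxx : A xx = b) :
    (∑ k ∈ Finset.Icc 1 t, ((k : ℝ) + k₀ + 1) *
        ((f (x (k + 1)) + g (x (k + 1))) - (f xx + g xx) - inner ℝ lam (A (x (k + 1)) - b)))
      + (∑ k ∈ Finset.Icc 1 t, ((k : ℝ) + k₀ + 1) / 2 * (2 * β k - ρ k) *
          ‖A (x (k + 1)) - b‖ ^ 2)
      + ((t : ℝ) + k₀ + 1) / 2 *
          qform (P t - β t • ((ContinuousLinearMap.adjoint A).comp A) + μ • 1) (x (t + 1) - xx)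
    ≤ (k₀ + 2) / (2 * ρ 1) * ‖lam - lamseq 1‖ ^ 2
      + (k₀ + 2) / 2 *
          qform (P 1 - β 1 • ((ContinuousLinearMap.adjoint A).comp A)) (x 1 - xx) := by
  have wstep : ∀ k : ℕ, 1 ≤ k →
      ((k : ℝ) + k₀ + 1) *
          ((f (x (k + 1)) + g (x (k + 1))) - (f xx + g xx) - inner ℝ lam (A (x (k + 1)) - b))
        + ((k : ℝ) + k₀ + 1) / 2 * (2 * β k - ρ k) * ‖A (x (k + 1)) - b‖ ^ 2
        + ((k : ℝ) + k₀ + 1) / (2 * ρ k) * ‖lam - lamseq (k + 1)‖ ^ 2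
        + ((k : ℝ) + k₀ + 1) / 2 *
            qform (P k - β k • ((ContinuousLinearMap.adjoint A).comp A) + μ • 1) (x (k + 1) - xx)
      ≤ ((k : ℝ) + k₀ + 1) / (2 * ρ k) * ‖lam - lamseq k‖ ^ 2
        + ((k : ℝ) + k₀ + 1) / 2 *
            qform (P k - β k • ((ContinuousLinearMap.adjoint A).comp A)) (x k - xx) := by
    intro k hk
    obtain ⟨v, hv, hopt⟩ := hiter k hk
    have h := onestep f g Gf Lf hfconv hfgrad hflip μ hμ hg A b (β k) (ρ k)
      (hρpos k hk) (P k) (hPsym k hk) (hPge k hk) (x k) (x (k + 1)) (lamseq k) v hv hopt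
      xx lam hxx
    rw [hlam k hk]
    have hw : (0:ℝ) ≤ (k : ℝ) + k₀ + 1 := by positivity
    have h2 := mul_le_mul_of_nonneg_left h hw
    have hρk := hρpos k hk
    have e1 : ((k : ℝ) + k₀ + 1) / (2 * ρ k) * ‖lam - (lamseq k - ρ k • (A (x (k + 1)) - b))‖ ^ 2
        = ((k : ℝ) + k₀ + 1) * (1 / (2 * ρ k) * ‖lam - (lamseq k - ρ k • (A (x (k + 1)) - b))‖ ^ 2) := by
      ring
    have e2 : ((k : ℝ) + k₀ + 1) / (2 * ρ k) * ‖lam - lamseq k‖ ^ 2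
        = ((k : ℝ) + k₀ + 1) * (1 / (2 * ρ k) * ‖lam - lamseq k‖ ^ 2) := by ring
    nlinarith [h2]
  have main : ∀ s : ℕ, 1 ≤ s →
      (∑ k ∈ Finset.Icc 1 s, ((k : ℝ) + k₀ + 1) *
          ((f (x (k + 1)) + g (x (k + 1))) - (f xx + g xx) - inner ℝ lam (A (x (k + 1)) - b)))
        + (∑ k ∈ Finset.Icc 1 s, ((k : ℝ) + k₀ + 1) / 2 * (2 * β k - ρ k) *
            ‖A (x (k + 1)) - b‖ ^ 2)
        + ((s : ℝ) + k₀ + 1) / (2 * ρ s) * ‖lam - lamseq (s + 1)‖ ^ 2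
        + ((s : ℝ) + k₀ + 1) / 2 *
            qform (P s - β s • ((ContinuousLinearMap.adjoint A).comp A) + μ • 1) (x (s + 1) - xx)
      ≤ (k₀ + 2) / (2 * ρ 1) * ‖lam - lamseq 1‖ ^ 2
        + (k₀ + 2) / 2 * qform (P 1 - β 1 • ((ContinuousLinearMap.adjoint A).comp A)) (x 1 - xx) := by
    intro s hs
    induction s, hs using Nat.le_induction with
    | base =>
      simp only [Finset.Icc_self, Finset.sum_singleton, Nat.cast_one]
      have h := wstep 1 le_rfl
      simp only [Nat.cast_one] at h
      have e : ((1:ℝ) + k₀ + 1) = k₀ + 2 := by ring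
      rw [e] at h ⊢
      linarith [h]
    | succ n hn ih =>
      rw [Finset.sum_Icc_succ_top (by omega : 1 ≤ n + 1),
        Finset.sum_Icc_succ_top (by omega : 1 ≤ n + 1)]
      have hstep := wstep (n + 1) (by omega)
      have hρm := hρmono (n + 1) (by omega)
      have hPm := hPmono (n + 1) (by omega) (x (n + 1) - xx)
      simp only [Nat.add_sub_cancel] at hρm hPm
      push_cast at hstep hρm hPm ⊢
      have hmul := mul_le_mul_of_nonneg_right hρm
        (by positivity : (0:ℝ) ≤ ‖lam - lamseq (n + 1)‖ ^ 2 / 2)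
      have e1 : ((n : ℝ) + 1 + k₀ + 1) / ρ (n + 1) * (‖lam - lamseq (n + 1)‖ ^ 2 / 2)
          = ((n : ℝ) + 1 + k₀ + 1) / (2 * ρ (n + 1)) * ‖lam - lamseq (n + 1)‖ ^ 2 := by
        ring
      have e2 : ((n : ℝ) + 1 + k₀) / ρ n * (‖lam - lamseq (n + 1)‖ ^ 2 / 2)
          = ((n : ℝ) + k₀ + 1) / (2 * ρ n) * ‖lam - lamseq (n + 1)‖ ^ 2 := by
        ring
      rw [e1, e2] at hmul
      linarith [hstep, hmul, hPm, ih]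
  have hfin := main t ht
  have hρt := hρpos t ht
  have hpos : 0 ≤ ((t : ℝ) + k₀ + 1) / (2 * ρ t) * ‖lam - lamseq (t + 1)‖ ^ 2 := by
    apply mul_nonneg
    · apply div_nonneg (by positivity) (by linarith)
    · positivity
  linarith [hfin, hpos]
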